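/- Let k ≥ 2 and let A_0, A_1, …, A_{k−1} be analytic functions in the unit disc Δ. Then every non-trivial solution f of the equation f^{(k)} + A_{k−1}(z)f^{(k−1)} + ⋯ + A_1(z)f′ + A_0(z)f = 0 satisfies ϱ_{(α(log),β,γ),M}[f] ≤ max{ϱ_{(α,β,γ),M}[A_j] : j = 0, …, k−1}. -/

import Mathlib

open Filter Topology MeasureTheory Asymptotics

/-- The maximum modulus `M(r,f) = max_{|z|=r} |f(z)|`. -/
noncomputable def maxMod (f : ℂ → ℂ) (r : ℝ) : ℝ :=
  sSup ((fun z => ‖f z‖) '' Metric.sphere (0 : ℂ) r)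

/-- `log⁺ x = max(0, log x)`. -/
noncomputable def logPlus (x : ℝ) : ℝ := max 0 (Real.log x)

/-- The Nevanlinna proximity function
`m(r,f) = (1/2π) ∫_0^{2π} log⁺ |f(r e^{iθ})| dθ`. -/
noncomputable def proxFun (f : ℂ → ℂ) (r : ℝ) : ℝ :=
  (2 * Real.pi)⁻¹ *
    ∫ θ in (0:ℝ)..(2 * Real.pi), logPlus ‖f ((r : ℂ) * Complex.exp (θ * Complex.I))‖

/-- The order of the pole of `f` at `z` (zero if `f` has no pole there). -/
noncomputable def poleOrder (f : ℂ → ℂ) (z : ℂ) : ℕ :=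
  @dite _ (MeromorphicAt f z) (Classical.dec _)
    (fun _ => (-(WithTop.untopD 0 (meromorphicOrderAt f z))).toNat) (fun _ => 0)

/-- `n(t,f)`: the number of poles of `f` in `|z| ≤ t`, counted with multiplicity. -/
noncomputable def poleCount (f : ℂ → ℂ) (t : ℝ) : ℝ :=
  ∑' z : (Metric.closedBall (0:ℂ) t), (poleOrder f z : ℝ)

/-- The integrated counting function
`N(r,f) = ∫_0^r (n(t,f) - n(0,f))/t dt + n(0,f) log r`. -/
noncomputable def countFun (f : ℂ → ℂ) (r : ℝ) : ℝ :=
  (∫ t in (0:ℝ)..r, (poleCount f t - poleCount f 0) / t) + poleCount f 0 * Real.log r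

/-- The Nevanlinna characteristic `T(r,f) = m(r,f) + N(r,f)`. -/
noncomputable def charT (f : ℂ → ℂ) (r : ℝ) : ℝ := proxFun f r + countFun f r

/-- The class `L` of growth functions. -/
def ClassL (a : ℝ → ℝ) : Prop :=
  Continuous a ∧ (∀ x, 0 ≤ a x) ∧ Monotone a ∧
    (∃ x₀, ∀ x ≤ x₀, a x = a x₀) ∧ Filter.Tendsto a Filter.atTop Filter.atTop

/-- `α ∈ L₁` : `α ∈ L` and `α(a+b) ≤ α(a)+α(b)+c` for all `a,b ≥ R₀`. -/
def ClassL1 (a : ℝ → ℝ) : Prop :=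
  ClassL a ∧ ∃ c > (0:ℝ), ∃ R₀ : ℝ, ∀ x ≥ R₀, ∀ y ≥ R₀, a (x + y) ≤ a x + a y + c

/-- `β ∈ L₂` : `β ∈ L` and `β(x+O(1)) = (1+o(1)) β(x)` as `x → +∞`. -/
def ClassL2 (b : ℝ → ℝ) : Prop :=
  ClassL b ∧ ∀ C : ℝ, Filter.Tendsto (fun x => b (x + C) / b x) Filter.atTop (nhds 1)

/-- `γ ∈ L₃` : `γ ∈ L` and `γ` is subadditive. -/
def ClassL3 (g : ℝ → ℝ) : Prop :=
  ClassL g ∧ ∃ R₀ : ℝ, ∀ x ≥ R₀, ∀ y ≥ R₀, g (x + y) ≤ g x + g y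

/-- The standing hypotheses on the growth scale functions `α, β, γ`:
`α ∈ L₁`, `β ∈ L₂`, `γ ∈ L₃`, `α(log^[p] x) = o(β(log γ(x)))` for `p ≥ 2`,
`α(log x) = o(α(x))`, and `α⁻¹(kx) = o(α⁻¹(x))` for each fixed `0 ≤ k < 1`. -/
def GrowthScale (a b g : ℝ → ℝ) : Prop :=
  ClassL1 a ∧ ClassL2 b ∧ ClassL3 g ∧
    (∀ p : ℕ, 2 ≤ p →
      (fun x => a (Real.log^[p] x)) =o[Filter.atTop] fun x => b (Real.log (g x))) ∧
    ((fun x => a (Real.log x)) =o[Filter.atTop] a) ∧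
    (∀ k : ℝ, 0 ≤ k → k < 1 →
      (fun x => Function.invFun a (k * x)) =o[Filter.atTop] fun x => Function.invFun a x)

/-- The comparison denominator `β(log γ(1/(1-r)))`. -/
noncomputable def betaDen (b g : ℝ → ℝ) (r : ℝ) : ℝ := b (Real.log (g (1 / (1 - r))))

/-- The `(α,β,γ)`-order of an analytic function in the unit disc,
defined via the maximum modulus. -/
noncomputable def orderM (a b g : ℝ → ℝ) (f : ℂ → ℂ) : EReal :=
  Filter.limsup
    (fun r : ℝ => ((a (Real.log (Real.log (maxMod f r))) / betaDen b g r : ℝ) : EReal))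
    (𝓝[<] (1:ℝ))

/-- The `(α(log),β,γ)`-order of an analytic function in the unit disc,
defined via the maximum modulus. -/
noncomputable def orderLogM (a b g : ℝ → ℝ) (f : ℂ → ℂ) : EReal :=
  Filter.limsup
    (fun r : ℝ =>
      ((a (Real.log (Real.log (Real.log (maxMod f r)))) / betaDen b g r : ℝ) : EReal))
    (𝓝[<] (1:ℝ))

/-- The `(α,β,γ)`-order of a meromorphic function in the unit disc,
defined via the Nevanlinna characteristic. -/
noncomputable def orderT (a b g : ℝ → ℝ) (f : ℂ → ℂ) : EReal :=
  Filter.limsup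
    (fun r : ℝ => ((a (Real.log (charT f r)) / betaDen b g r : ℝ) : EReal))
    (𝓝[<] (1:ℝ))

/-- The `(α(log),β,γ)`-order of a meromorphic function in the unit disc,
defined via the Nevanlinna characteristic. -/
noncomputable def orderLogT (a b g : ℝ → ℝ) (f : ℂ → ℂ) : EReal :=
  Filter.limsup
    (fun r : ℝ => ((a (Real.log (Real.log (charT f r))) / betaDen b g r : ℝ) : EReal))
    (𝓝[<] (1:ℝ))

/-- The `(α,β,γ)`-type (with order value `rho`) of an analytic function in the
unit disc, defined via the maximum modulus. -/
noncomputable def typeM (a b g : ℝ → ℝ) (rho : ℝ) (f : ℂ → ℂ) : EReal :=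
  Filter.limsup
    (fun r : ℝ =>
      ((Real.exp (a (Real.log (Real.log (maxMod f r)))) /
        (Real.exp (betaDen b g r)) ^ rho : ℝ) : EReal))
    (𝓝[<] (1:ℝ))

/-- A set `F ⊂ [0,1)` has finite logarithmic measure if `∫_F dr/(1-r) < ∞`. -/
def FiniteLogMeasure (F : Set ℝ) : Prop :=
  ∫⁻ r in F, ENNReal.ofReal (1 / (1 - r)) < ⊤

/-- A set `F ⊂ [0,1)` has infinite logarithmic measure if `∫_F dr/(1-r) = ∞`. -/
def InfiniteLogMeasure (F : Set ℝ) : Prop :=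
  ∫⁻ r in F, ENNReal.ofReal (1 / (1 - r)) = ⊤

/-- `f` is a solution, analytic on the unit disc, of the linear differential
equation `f^{(k)} + A_{k-1} f^{(k-1)} + ⋯ + A_1 f' + A_0 f = 0`. -/
def IsSolution (k : ℕ) (A : ℕ → ℂ → ℂ) (f : ℂ → ℂ) : Prop :=
  AnalyticOnNhd ℂ f (Metric.ball (0:ℂ) 1) ∧
    ∀ z ∈ Metric.ball (0:ℂ) 1,
      iteratedDeriv k f z + ∑ j ∈ Finset.range k, A j z * iteratedDeriv j f z = 0

section Stmt9Aux

open Metric Set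

lemma maxMod_nonneg' (f : ℂ → ℂ) (r : ℝ) : 0 ≤ maxMod f r := by
  apply Real.sSup_nonneg
  rintro x ⟨z, _, rfl⟩
  exact norm_nonneg _

lemma maxMod_le' {f : ℂ → ℂ} {r C : ℝ} (hC : 0 ≤ C)
    (h : ∀ z : ℂ, ‖z‖ = r → ‖f z‖ ≤ C) : maxMod f r ≤ C := by
  apply Real.sSup_le _ hC
  rintro x ⟨z, hz, rfl⟩
  exact h z (by simpa [mem_sphere_iff_norm] using hz)

lemma le_maxMod' {f : ℂ → ℂ} (hf : AnalyticOnNhd ℂ f (ball (0:ℂ) 1))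
    {r : ℝ} (hr0 : 0 < r) (hr1 : r < 1) {w : ℂ} (hw : ‖w‖ ≤ r) :
    ‖f w‖ ≤ maxMod f r := by
  have hsub : closedBall (0:ℂ) r ⊆ ball (0:ℂ) 1 := by
    intro x hx
    simp only [mem_closedBall, mem_ball, dist_zero_right] at *
    exact lt_of_le_of_lt hx hr1
  have hdiff : DifferentiableOn ℂ f (ball (0:ℂ) 1) :=
    fun x hx => ((hf x hx).differentiableAt).differentiableWithinAt
  have hcont : ContinuousOn f (sphere (0:ℂ) r) :=
    (hdiff.continuousOn).mono (fun x hx => hsub (sphere_subset_closedBall hx))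
  have hba : BddAbove ((fun z => ‖f z‖) '' sphere (0:ℂ) r) :=
    ((isCompact_sphere (0:ℂ) r).image_of_continuousOn hcont.norm).bddAbove
  have hC : ∀ z ∈ frontier (ball (0:ℂ) r), ‖f z‖ ≤ maxMod f r := by
    intro z hz
    rw [frontier_ball (0:ℂ) hr0.ne'] at hz
    exact le_csSup hba ⟨z, hz, rfl⟩
  have hdc : DiffContOnCl ℂ f (ball (0:ℂ) r) :=
    ⟨hdiff.mono (fun x hx => ball_subset_ball hr1.le hx),
      (hdiff.continuousOn).mono (by rw [closure_ball (0:ℂ) hr0.ne']; exact hsub)⟩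
  have hwcl : w ∈ closure (ball (0:ℂ) r) := by
    rw [closure_ball (0:ℂ) hr0.ne']
    simpa [mem_closedBall, dist_zero_right] using hw
  exact Complex.norm_le_of_forall_mem_frontier_norm_le isBounded_ball hdc hC hwcl

lemma maxMod_mono' {f : ℂ → ℂ} (hf : AnalyticOnNhd ℂ f (ball (0:ℂ) 1))
    {r s : ℝ} (hr0 : 0 < r) (hrs : r ≤ s) (hs : s < 1) :
    maxMod f r ≤ maxMod f s := by
  refine maxMod_le' (maxMod_nonneg' f s) (fun z hz => ?_)
  exact le_maxMod' hf (lt_of_lt_of_le hr0 hrs) hs (hz ▸ hrs)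

lemma log_le_log_of_abs_le' {u V : ℝ} (hV : 1 ≤ V) (h : |u| ≤ V) :
    Real.log u ≤ Real.log V := by
  rcases eq_or_ne u 0 with rfl | hu
  · simp [Real.log_nonneg hV]
  · rw [← Real.log_abs]
    exact Real.log_le_log (abs_pos.2 hu) h

lemma solution_maxMod_bound' {k : ℕ} (hk : 2 ≤ k) {A : ℕ → ℂ → ℂ}
    (hA : ∀ j < k, AnalyticOnNhd ℂ (A j) (Metric.ball (0:ℂ) 1)) {f : ℂ → ℂ}
    (hf : IsSolution k A f) :
    ∃ C : ℝ, 1 ≤ C ∧ ∀ r : ℝ, 0 < r → r < 1 →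
      maxMod f r ≤ C * Real.exp (1 + ∑ j ∈ Finset.range k, maxMod (A j) r) := by
  obtain ⟨hfA, heqn⟩ := hf
  have hk0 : 0 < k := by omega
  set v0 : Fin k → ℂ := fun i => iteratedDeriv i f 0 with hv0
  refine ⟨max ‖v0‖ 1, le_max_right _ _, ?_⟩
  intro r hr0 hr1
  set S := ∑ j ∈ Finset.range k, maxMod (A j) r with hS
  have hS0 : 0 ≤ S := Finset.sum_nonneg fun j _ => maxMod_nonneg' _ _
  have hexp : (0:ℝ) < Real.exp (1 + S) := Real.exp_pos _
  apply maxMod_le' (by positivity)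
  intro z hz
  have h_an : ∀ n : ℕ, AnalyticOnNhd ℂ (iteratedDeriv n f) (ball (0:ℂ) 1) := by
    intro n
    rw [iteratedDeriv_eq_iterate]
    exact hfA.iterated_deriv n
  have hHD : ∀ (n : ℕ) (w : ℂ), w ∈ ball (0:ℂ) 1 →
      HasDerivAt (iteratedDeriv n f) (iteratedDeriv (n+1) f w) w := by
    intro n w hw
    have h := ((h_an n w hw).differentiableAt).hasDerivAt
    rwa [iteratedDeriv_succ]
  have hzball : ∀ t : ℝ, t ∈ Icc (0:ℝ) 1 → t • z ∈ ball (0:ℂ) 1 := by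
    intro t ht
    rw [mem_ball, dist_zero_right, norm_smul, Real.norm_eq_abs,
      abs_of_nonneg ht.1, hz]
    nlinarith [ht.2]
  have hzr : ∀ t : ℝ, t ∈ Icc (0:ℝ) 1 → ‖t • z‖ ≤ r := by
    intro t ht
    rw [norm_smul, Real.norm_eq_abs, abs_of_nonneg ht.1, hz]
    nlinarith [ht.2]
  set v : ℝ → Fin k → ℂ := fun t i => iteratedDeriv i f (t • z) with hv
  set w : ℝ → Fin k → ℂ := fun t i => z • iteratedDeriv ((i:ℕ)+1) f (t • z) with hw
  have hderiv : ∀ t ∈ Icc (0:ℝ) 1, HasDerivAt v (w t) t := by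
    intro t ht
    refine hasDerivAt_pi.2 fun i => ?_
    have h1 : HasDerivAt (fun s : ℝ => s • z) ((1:ℝ) • z) t :=
      (hasDerivAt_id t).smul_const z
    rw [one_smul] at h1
    exact (hHD i (t • z) (hzball t ht)).scomp t h1
  have hbound : ∀ t ∈ Ico (0:ℝ) 1, ‖w t‖ ≤ (1 + S) * ‖v t‖ + 0 := by
    intro t ht
    have ht' : t ∈ Icc (0:ℝ) 1 := Ico_subset_Icc_self ht
    rw [add_zero]
    have hKv : 0 ≤ (1 + S) * ‖v t‖ := by positivity
    rw [pi_norm_le_iff_of_nonneg hKv]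
    intro i
    have hnorm : ‖w t i‖ = r * ‖iteratedDeriv ((i:ℕ)+1) f (t • z)‖ := by
      rw [hw]; simp [norm_smul, hz]
    rcases lt_or_eq_of_le (Nat.succ_le_of_lt i.isLt) with hlt | heq2
    · have : iteratedDeriv ((i:ℕ)+1) f (t • z) = v t ⟨(i:ℕ)+1, hlt⟩ := rfl
      rw [hnorm, this]
      have h1 : ‖v t ⟨(i:ℕ)+1, hlt⟩‖ ≤ ‖v t‖ := norm_le_pi_norm _ _
      nlinarith [norm_nonneg (v t), hr1.le, hr0.le]
    · have heq3 := heqn (t • z) (hzball t ht')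
      have heq4 : iteratedDeriv k f (t • z)
          = -∑ j ∈ Finset.range k, A j (t • z) * iteratedDeriv j f (t • z) := by
        linear_combination heq3
      rw [hnorm, show (i:ℕ)+1 = k from heq2, heq4, norm_neg]
      have hsum : ‖∑ j ∈ Finset.range k, A j (t • z) * iteratedDeriv j f (t • z)‖
          ≤ S * ‖v t‖ := by
        refine le_trans (norm_sum_le _ _) ?_
        rw [hS, Finset.sum_mul]
        refine Finset.sum_le_sum fun j hj => ?_
        have hjk : j < k := Finset.mem_range.1 hj
        rw [norm_mul]
        have hAj : ‖A j (t • z)‖ ≤ maxMod (A j) r :=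
          le_maxMod' (hA j hjk) hr0 hr1 (hzr t ht')
        have hvj : ‖iteratedDeriv j f (t • z)‖ ≤ ‖v t‖ := by
          have : iteratedDeriv j f (t • z) = v t ⟨j, hjk⟩ := rfl
          rw [this]; exact norm_le_pi_norm _ _
        exact mul_le_mul hAj hvj (norm_nonneg _) (maxMod_nonneg' _ _)
      nlinarith [norm_nonneg (v t), norm_nonneg (∑ j ∈ Finset.range k,
        A j (t • z) * iteratedDeriv j f (t • z)), hr1.le, hr0.le]
  have hcont : ContinuousOn v (Icc (0:ℝ) 1) :=
    fun t ht => ((hderiv t ht).continuousAt).continuousWithinAt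
  have hgron := norm_le_gronwallBound_of_norm_deriv_right_le hcont
    (fun t ht => (hderiv t (Ico_subset_Icc_self ht)).hasDerivWithinAt)
    (le_max_left ‖v0‖ 1 |>.trans_eq' (by rw [hv]; simp [hv0]))
    hbound 1 (by norm_num)
  rw [gronwallBound_ε0] at hgron
  have hfz : f z = v 1 ⟨0, hk0⟩ := by rw [hv]; simp
  calc ‖f z‖ ≤ ‖v 1‖ := by rw [hfz]; exact norm_le_pi_norm _ _
    _ ≤ max ‖v0‖ 1 * Real.exp ((1 + S) * (1 - 0)) := hgron
    _ = max ‖v0‖ 1 * Real.exp (1 + S) := by norm_num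

lemma normSq_identity (p q : ℂ) :
    Complex.normSq (1 + (starRingEnd ℂ) q * p) - Complex.normSq (p + q)
      = (1 - Complex.normSq q) * (1 - Complex.normSq p) := by
  simp only [Complex.normSq_apply, Complex.add_re, Complex.add_im, Complex.mul_re,
    Complex.mul_im, Complex.one_re, Complex.one_im, Complex.conj_re, Complex.conj_im]
  ring

lemma normSq_identity' (p q : ℂ) :
    Complex.normSq (1 - (starRingEnd ℂ) q * p) - Complex.normSq (p - q)
      = (1 - Complex.normSq q) * (1 - Complex.normSq p) := by
  simp only [Complex.normSq_apply, Complex.sub_re, Complex.sub_im, Complex.mul_re,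
    Complex.mul_im, Complex.one_re, Complex.one_im, Complex.conj_re, Complex.conj_im]
  ring

lemma schwarz_pick_bound {f : ℂ → ℂ} (hd : DifferentiableOn ℂ f (ball (0:ℂ) 1))
    (hm : MapsTo f (ball (0:ℂ) 1) (ball (0:ℂ) 1)) {z : ℂ} (hz : ‖z‖ < 1) :
    (1 - ‖z‖) * (1 - Complex.normSq (f 0)) / 8 ≤ 1 - ‖f z‖ := by
  set w : ℂ := f 0 with hwdef
  have h0mem : (0:ℂ) ∈ ball (0:ℂ) 1 := mem_ball_self one_pos
  have hzmem : z ∈ ball (0:ℂ) 1 := mem_ball_zero_iff.2 hz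
  have hw : ‖w‖ < 1 := mem_ball_zero_iff.1 (hm h0mem)
  have hfz : ‖f z‖ < 1 := mem_ball_zero_iff.1 (hm hzmem)
  have hden : ∀ ζ ∈ ball (0:ℂ) 1, 1 - (starRingEnd ℂ) w * f ζ ≠ 0 := by
    intro ζ hζ h
    have h1 : (1:ℂ) = (starRingEnd ℂ) w * f ζ := by linear_combination h
    have h2 : ‖(starRingEnd ℂ) w * f ζ‖ < 1 := by
      rw [norm_mul, RCLike.norm_conj]
      have := mem_ball_zero_iff.1 (hm hζ)
      nlinarith [norm_nonneg w, norm_nonneg (f ζ)]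
    rw [← h1] at h2
    simp at h2
  set G : ℂ → ℂ := fun ζ => (f ζ - w) / (1 - (starRingEnd ℂ) w * f ζ) with hGdef
  have hGd : DifferentiableOn ℂ G (ball (0:ℂ) 1) := by
    apply DifferentiableOn.div
    · exact hd.sub (differentiableOn_const w)
    · exact (differentiableOn_const 1).sub ((differentiableOn_const _).mul hd)
    · exact hden
  have hGm : MapsTo G (ball (0:ℂ) 1) (ball (0:ℂ) 1) := by
    intro ζ hζ
    rw [mem_ball_zero_iff, hGdef]
    have hd0 := hden ζ hζ
    have hfζ : ‖f ζ‖ < 1 := mem_ball_zero_iff.1 (hm hζ)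
    rw [norm_div, div_lt_one (norm_pos_iff.2 hd0)]
    have hkey := normSq_identity' (f ζ) w
    have h1 : Complex.normSq (f ζ) = ‖f ζ‖^2 := (Complex.sq_norm _).symm
    have h2 : Complex.normSq w = ‖w‖^2 := (Complex.sq_norm _).symm
    have h3 : Complex.normSq (1 - (starRingEnd ℂ) w * f ζ)
        = ‖1 - (starRingEnd ℂ) w * f ζ‖^2 := (Complex.sq_norm _).symm
    have h4 : Complex.normSq (f ζ - w) = ‖f ζ - w‖^2 := (Complex.sq_norm _).symm
    rw [h1, h2, h3, h4] at hkey
    have hpos : 0 < (1 - ‖w‖^2) * (1 - ‖f ζ‖^2) :=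
      mul_pos (by nlinarith [norm_nonneg w]) (by nlinarith [norm_nonneg (f ζ)])
    refine lt_of_pow_lt_pow_left₀ 2 (norm_nonneg _) ?_
    nlinarith [hpos]
  have hG0 : G 0 = 0 := by
    rw [hGdef]; simp [← hwdef]
  have hS : ‖G z‖ ≤ ‖z‖ := by
    apply Complex.norm_le_norm_of_mapsTo_ball hGd (hGm.mono_right ball_subset_closedBall) hG0
    exact hz
  set p : ℂ := G z with hpdef
  have hd0 : 1 - (starRingEnd ℂ) w * f z ≠ 0 := hden z hzmem
  have hpd : p * (1 - (starRingEnd ℂ) w * f z) = f z - w := div_mul_cancel₀ _ hd0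
  have hkey : f z * (1 + (starRingEnd ℂ) w * p) = p + w := by linear_combination -hpd
  have hns : Complex.normSq (f z) * Complex.normSq (1 + (starRingEnd ℂ) w * p)
      = Complex.normSq (p + w) := by
    rw [← map_mul]; exact congrArg _ hkey
  have hid := normSq_identity p w
  have hmain : (1 - Complex.normSq (f z)) * Complex.normSq (1 + (starRingEnd ℂ) w * p)
      = (1 - Complex.normSq w) * (1 - Complex.normSq p) := by
    linear_combination hid - hns
  have hple : ‖p‖ ≤ ‖z‖ := by exact hS
  have hq4 : Complex.normSq (1 + (starRingEnd ℂ) w * p) ≤ 4 := by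
    have h5 : ‖(1:ℂ) + (starRingEnd ℂ) w * p‖ ≤ 2 := by
      refine le_trans (norm_add_le _ _) ?_
      rw [norm_one, norm_mul, RCLike.norm_conj]
      nlinarith [norm_nonneg p, norm_nonneg w, hple, hz]
    have := Complex.sq_norm (1 + (starRingEnd ℂ) w * p)
    nlinarith [norm_nonneg (1 + (starRingEnd ℂ) w * p)]
  have hnp : Complex.normSq p ≤ ‖z‖^2 := by
    have := Complex.sq_norm p
    nlinarith [norm_nonneg p, norm_nonneg z]
  have hnw : Complex.normSq w < 1 := by
    have := Complex.sq_norm w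
    nlinarith [norm_nonneg w]
  have hnw0 : 0 ≤ Complex.normSq w := Complex.normSq_nonneg w
  have hnfz : Complex.normSq (f z) = ‖f z‖^2 := by
    rw [← Complex.sq_norm]
  rw [hnfz] at hmain
  have hnp0 : 0 ≤ Complex.normSq p := Complex.normSq_nonneg p
  have e1 : (1 - ‖f z‖^2) * Complex.normSq (1 + (starRingEnd ℂ) w * p)
      ≤ (1 - ‖f z‖^2) * 4 :=
    mul_le_mul_of_nonneg_left hq4 (by nlinarith [norm_nonneg (f z)])
  have e2 : (1 - Complex.normSq w) * (1 - ‖z‖^2)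
      ≤ (1 - Complex.normSq w) * (1 - Complex.normSq p) := by
    nlinarith [norm_nonneg z]
  have e3 : (1 - Complex.normSq w) * (1 - ‖z‖^2) ≤ 4 * (1 - ‖f z‖^2) := by
    linarith [hmain, e1, e2]
  nlinarith [e3, sq_nonneg (1 - ‖f z‖), norm_nonneg (f z),
    mul_nonneg (mul_nonneg (norm_nonneg z) (sub_nonneg.2 hz.le))
      (sub_nonneg.2 hnw.le)]

lemma L1_shift {a : ℝ → ℝ} (ha : ClassL1 a) (C : ℝ) :
    ∃ D : ℝ, 0 ≤ D ∧ ∀ x : ℝ, a (C + x) ≤ a x + D := by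
  obtain ⟨⟨_, hpos, hmono, _, _⟩, c, hc, R₀, hsub⟩ := ha
  refine ⟨a (max C R₀) + c + a (C + R₀),
    by have := hpos (max C R₀); have := hpos (C + R₀); linarith, fun x => ?_⟩
  rcases le_or_gt R₀ x with hx | hx
  · have h1 : a (C + x) ≤ a (max C R₀ + x) := hmono (by simp [le_max_left, add_le_add_right])
    have h2 := hsub (max C R₀) (le_max_right _ _) x hx
    have := hpos (C + R₀)
    linarith
  · have h1 : a (C + x) ≤ a (C + R₀) := hmono (by linarith)
    have := hpos x
    have := hpos (max C R₀)
    linarith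

lemma tendsto_one_div_one_sub :
    Filter.Tendsto (fun r : ℝ => 1 / (1 - r)) (nhdsWithin 1 (Set.Iio 1)) Filter.atTop := by
  have h1 : Filter.Tendsto (fun r : ℝ => 1 - r) (nhdsWithin 1 (Set.Iio 1))
      (nhdsWithin 0 (Set.Ioi 0)) := by
    rw [tendsto_nhdsWithin_iff]
    constructor
    · have : Filter.Tendsto (fun r : ℝ => 1 - r) (nhds (1:ℝ)) (nhds (1 - 1)) :=
        (continuous_const.sub continuous_id).tendsto 1
      simpa using this.mono_left nhdsWithin_le_nhds
    · filter_upwards [self_mem_nhdsWithin] with r hr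
      simp only [mem_Iio] at hr
      simp only [mem_Ioi]
      linarith
  have h2 := tendsto_inv_nhdsGT_zero.comp h1
  refine h2.congr fun r => ?_
  simp [one_div, Function.comp]

lemma betaDen_tendsto {b g : ℝ → ℝ} (hb : Filter.Tendsto b Filter.atTop Filter.atTop)
    (hg : Filter.Tendsto g Filter.atTop Filter.atTop) :
    Filter.Tendsto (betaDen b g) (nhdsWithin 1 (Set.Iio 1)) Filter.atTop :=
  hb.comp (Real.tendsto_log_atTop.comp (hg.comp tendsto_one_div_one_sub))

lemma log_two_iter (x : ℝ) : Real.log^[2] x = Real.log (Real.log x) := by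
  rw [show (2:ℕ) = 1 + 1 from rfl, Function.iterate_succ_apply', Function.iterate_one]

end Stmt9Aux

set_option maxHeartbeats 1000000 in
theorem stmt9
    (a b g : ℝ → ℝ) (hscale : GrowthScale a b g)
    (k : ℕ) (hk : 2 ≤ k) (A : ℕ → ℂ → ℂ)
    (hA : ∀ j < k, AnalyticOnNhd ℂ (A j) (Metric.ball (0:ℂ) 1))
    (f : ℂ → ℂ) (hf : IsSolution k A f)
    (hf0 : ∃ z ∈ Metric.ball (0:ℂ) 1, f z ≠ 0) :
    orderLogM a b g f ≤ ⨆ j : Fin k, orderM a b g (A j) := by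
  classical
  obtain ⟨ha1, hb2, hg3, hsmall, _hlog, _hinv⟩ := hscale
  have hamono : Monotone a := ha1.1.2.2.1
  have hapos : ∀ x, 0 ≤ a x := ha1.1.2.1
  have hbpos : ∀ x, 0 ≤ b x := hb2.1.2.1
  have hbtop : Filter.Tendsto b Filter.atTop Filter.atTop := hb2.1.2.2.2.2
  have hgtop : Filter.Tendsto g Filter.atTop Filter.atTop := hg3.1.2.2.2.2
  have hβtop : Filter.Tendsto (betaDen b g) (𝓝[<] (1:ℝ)) Filter.atTop :=
    betaDen_tendsto hbtop hgtop
  obtain ⟨z₀, hz₀mem, hz₀ne⟩ := hf0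
  have hfA : AnalyticOnNhd ℂ f (Metric.ball (0:ℂ) 1) := hf.1
  have hz₀1 : ‖z₀‖ < 1 := by
    simpa [Metric.mem_ball, dist_zero_right] using hz₀mem
  have hβ0 : ∀ r, 0 ≤ betaDen b g r := fun r => hbpos _
  -- the right-hand side is nonnegative
  have hRHS0 : (0 : EReal) ≤ ⨆ j : Fin k, orderM a b g (A j) := by
    have h0k : (0:ℕ) < k := by omega
    refine le_trans ?_ (le_iSup (fun j : Fin k => orderM a b g (A j)) ⟨0, h0k⟩)
    refine le_limsup_of_frequently_le (Filter.Eventually.frequently ?_)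
    filter_upwards with r
    have h1 : (0:ℝ) ≤ a (Real.log (Real.log (maxMod (A ((⟨0, h0k⟩ : Fin k) : ℕ)) r)))
        / betaDen b g r := div_nonneg (hapos _) (hβ0 _)
    exact_mod_cast EReal.coe_nonneg.2 h1
  suffices H : ∀ q : ℝ, (⨆ j : Fin k, orderM a b g (A j)) < (q:EReal) →
      orderLogM a b g f ≤ (q:EReal) by
    by_contra hcon
    rw [not_le] at hcon
    obtain ⟨q, hq1, hq2⟩ := EReal.exists_between_coe_real hcon
    exact absurd (H q hq1) (not_le.2 hq2)
  intro q hq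
  have hq0 : (0:ℝ) < q := by
    have h := lt_of_le_of_lt hRHS0 hq
    exact_mod_cast h
  suffices Hev : ∀ᶠ r in 𝓝[<] (1:ℝ),
      ((a (Real.log (Real.log (Real.log (maxMod f r)))) / betaDen b g r : ℝ) : EReal)
        ≤ (q:EReal) by
    exact Filter.limsup_le_of_le (by isBoundedDefault) Hev
  by_cases hbig : ∃ s ∈ Set.Ioo (0:ℝ) 1, 1 < maxMod f s
  · -- CASE A : the solution eventually exceeds 1 in max modulus
    obtain ⟨s, hs, hms⟩ := hbig
    obtain ⟨C, hC1, hCbound⟩ := solution_maxMod_bound' hk hA hf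
    set C₁ : ℝ := C * Real.exp 1 with hC₁def
    clear_value C₁
    have hC₁1 : Real.exp 1 ≤ C₁ := by
      rw [hC₁def]
      exact le_mul_of_one_le_left (Real.exp_pos 1).le hC1
    have hC₁pos : (0:ℝ) < C₁ := lt_of_lt_of_le (Real.exp_pos 1) hC₁1
    have hlC₁ : 1 ≤ Real.log C₁ := by
      calc (1:ℝ) = Real.log (Real.exp 1) := (Real.log_exp 1).symm
      _ ≤ Real.log C₁ := Real.log_le_log (Real.exp_pos 1) hC₁1
    set δ' : ℝ := Real.log (maxMod f s) with hδ'
    clear_value δ'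
    have hδ'pos : 0 < δ' := by rw [hδ']; exact Real.log_pos hms
    set c₄ : ℝ := Real.log (|Real.log δ'| + 1) with hc₄
    clear_value c₄
    have hlk : (1:ℝ) ≤ Real.log C₁ + k := by
      have : (0:ℝ) ≤ k := Nat.cast_nonneg k
      linarith
    set c₆ : ℝ := Real.log (Real.log (Real.log C₁ + k) + 1) with hc₆
    clear_value c₆
    obtain ⟨D₆, hD₆0, hD₆⟩ := L1_shift ha1 c₆
    set CA : ℝ := a c₄ + D₆ + a 0 with hCA
    clear_value CA
    have hCA0 : 0 ≤ CA := by
      have := hapos c₄; have := hapos 0; rw [hCA]; linarith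
    obtain ⟨q', hq'1, hq'2⟩ := EReal.exists_between_coe_real hq
    have hq'q : q' < q := by exact_mod_cast hq'2
    have hev1 : ∀ᶠ r in 𝓝[<] (1:ℝ), ∀ j : Fin k,
        a (Real.log (Real.log (maxMod (A (j:ℕ)) r))) / betaDen b g r < q' := by
      rw [Filter.eventually_all]
      intro j
      have hlt : orderM a b g (A (j:ℕ)) < (q' : EReal) :=
        lt_of_le_of_lt (le_iSup (fun j : Fin k => orderM a b g (A j)) j) hq'1
      have hev := Filter.eventually_lt_of_limsup_lt hlt
      filter_upwards [hev] with r hr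
      exact_mod_cast hr
    have hev2 : ∀ᶠ r in 𝓝[<] (1:ℝ), max 1 (CA / (q - q')) ≤ betaDen b g r :=
      hβtop.eventually_ge_atTop _
    have hev3 : Set.Ioo s 1 ∈ 𝓝[<] (1:ℝ) :=
      Ioo_mem_nhdsLT_of_mem ⟨hs.2, le_refl 1⟩
    filter_upwards [hev1, hev2, hev3] with r hr1 hr2 hr3
    rw [EReal.coe_le_coe_iff]
    have hr0 : 0 < r := lt_trans hs.1 hr3.1
    have hr1' : r < 1 := hr3.2
    have hβpos : (0:ℝ) < betaDen b g r :=
      lt_of_lt_of_le one_pos (le_trans (le_max_left _ _) hr2)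
    obtain ⟨j, hjmem, hjmax⟩ := Finset.exists_max_image (Finset.range k)
      (fun j => maxMod (A j) r) ⟨0, Finset.mem_range.2 (by omega)⟩
    have hjk : j < k := Finset.mem_range.1 hjmem
    set Mj := maxMod (A j) r with hMj
    clear_value Mj
    have hMj0 : 0 ≤ Mj := by rw [hMj]; exact maxMod_nonneg' _ _
    set m := maxMod f r with hm
    have hmlow : maxMod f s ≤ m := by
      rw [hm]; exact maxMod_mono' hfA hs.1 hr3.1.le hr1'
    have hm1 : 1 < m := lt_of_lt_of_le hms hmlow
    have hm0 : 0 < m := lt_trans one_pos hm1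
    set S : ℝ := ∑ i ∈ Finset.range k, maxMod (A i) r with hSdef
    have hS0 : 0 ≤ S := by
      rw [hSdef]; exact Finset.sum_nonneg fun i _ => maxMod_nonneg' _ _
    have hSk : S ≤ k * Mj := by
      rw [hSdef]
      calc (∑ i ∈ Finset.range k, maxMod (A i) r) ≤ (Finset.range k).card • Mj :=
            Finset.sum_le_card_nsmul _ _ _ (fun i hi => hjmax i hi)
      _ = k * Mj := by simp [nsmul_eq_mul]
    have hmup : m ≤ C₁ * Real.exp S := by
      have h := hCbound r hr0 hr1'
      rw [Real.exp_add, ← hSdef, ← hm] at h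
      calc m ≤ C * (Real.exp 1 * Real.exp S) := h
      _ = C₁ * Real.exp S := by rw [hC₁def]; ring
    clear_value m S
    set L1 : ℝ := Real.log m with hL1
    have hL1pos : 0 < L1 := by rw [hL1]; exact Real.log_pos hm1
    set T : ℝ := Real.log C₁ + S with hT
    clear_value T
    have hT1 : 1 ≤ T := by rw [hT]; linarith
    have hL1T : L1 ≤ T := by
      rw [hL1, hT]
      calc Real.log m ≤ Real.log (C₁ * Real.exp S) := Real.log_le_log hm0 hmup
      _ = Real.log C₁ + S := by
          rw [Real.log_mul hC₁pos.ne' (Real.exp_pos S).ne', Real.log_exp]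
    have hL1δ : δ' ≤ L1 := by
      rw [hδ', hL1]
      exact Real.log_le_log (lt_trans one_pos hms) hmlow
    set L2 : ℝ := Real.log L1 with hL2
    clear_value L1
    set W : ℝ := max Mj (Real.exp 1) with hW
    have hW1 : Real.exp 1 ≤ W := by rw [hW]; exact le_max_right _ _
    have hWpos : 0 < W := lt_of_lt_of_le (Real.exp_pos 1) hW1
    have hW1' : 1 ≤ W := le_trans (by linarith [Real.add_one_le_exp (1:ℝ)]) hW1
    have hlW1 : 1 ≤ Real.log W := by
      calc (1:ℝ) = Real.log (Real.exp 1) := (Real.log_exp 1).symm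
      _ ≤ Real.log W := Real.log_le_log (Real.exp_pos 1) hW1
    have hTW : T ≤ (Real.log C₁ + k) * W := by
      have h1 : Mj ≤ W := by rw [hW]; exact le_max_left _ _
      have hk0' : (0:ℝ) ≤ k := Nat.cast_nonneg k
      have h2 : Real.log C₁ ≤ Real.log C₁ * W :=
        le_mul_of_one_le_right (by linarith) hW1'
      have h3 : S ≤ (k:ℝ) * W :=
        le_trans hSk (mul_le_mul_of_nonneg_left h1 hk0')
      rw [hT]
      calc Real.log C₁ + S ≤ Real.log C₁ * W + (k:ℝ) * W := add_le_add h2 h3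
      _ = (Real.log C₁ + k) * W := by ring
    have hlogT : Real.log T ≤ (Real.log (Real.log C₁ + k) + 1) * Real.log W := by
      have h1 : Real.log T ≤ Real.log ((Real.log C₁ + k) * W) :=
        Real.log_le_log (by linarith) hTW
      rw [Real.log_mul (by linarith) hWpos.ne'] at h1
      have h2 : 0 ≤ Real.log (Real.log C₁ + k) := Real.log_nonneg hlk
      have h3 : Real.log (Real.log C₁ + k) ≤ Real.log (Real.log C₁ + k) * Real.log W :=
        le_mul_of_one_le_right h2 hlW1
      linarith
    have hV1 : (1:ℝ) ≤ |Real.log δ'| + 1 := by linarith [abs_nonneg (Real.log δ')]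
    have hXb : Real.log L2 ≤ max c₄ (c₆ + Real.log (Real.log W)) := by
      have habs : |L2| ≤ max (|Real.log δ'| + 1)
          ((Real.log (Real.log C₁ + k) + 1) * Real.log W) := by
        rw [abs_le]
        constructor
        · have h1 : Real.log δ' ≤ L2 := by
            rw [hL2]; exact Real.log_le_log hδ'pos hL1δ
          have h2 : -|Real.log δ'| ≤ Real.log δ' := neg_abs_le _
          have h3 : (|Real.log δ'| + 1) ≤ max (|Real.log δ'| + 1)
              ((Real.log (Real.log C₁ + k) + 1) * Real.log W) := le_max_left _ _
          linarith
        · have h1 : L2 ≤ Real.log T := by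
            rw [hL2]; exact Real.log_le_log hL1pos hL1T
          exact le_trans (le_trans h1 hlogT) (le_max_right _ _)
      have hVone : (1:ℝ) ≤ max (|Real.log δ'| + 1)
          ((Real.log (Real.log C₁ + k) + 1) * Real.log W) :=
        le_trans hV1 (le_max_left _ _)
      have hlog := log_le_log_of_abs_le' hVone habs
      rcases max_cases (|Real.log δ'| + 1)
          ((Real.log (Real.log C₁ + k) + 1) * Real.log W) with ⟨hmax, _⟩ | ⟨hmax, _⟩
      · rw [hmax, ← hc₄] at hlog
        exact le_trans hlog (le_max_left _ _)
      · rw [hmax, Real.log_mul (ne_of_gt (by linarith [Real.log_nonneg hlk]))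
          (ne_of_gt (by linarith)), ← hc₆] at hlog
        exact le_trans hlog (le_max_right _ _)
    clear_value L2
    have haX : a (Real.log L2) ≤ CA + a (Real.log (Real.log Mj)) := by
      have h1 : a (Real.log L2) ≤ max (a c₄) (a (c₆ + Real.log (Real.log W))) := by
        have h := hamono hXb
        rwa [hamono.map_max] at h
      have h2 : a (c₆ + Real.log (Real.log W)) ≤ a (Real.log (Real.log W)) + D₆ :=
        hD₆ _
      have h3 : a (Real.log (Real.log W)) ≤ a 0 + a (Real.log (Real.log Mj)) := by
        rcases le_total (Real.exp 1) Mj with hc | hc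
        · rw [hW, max_eq_left hc]
          exact le_add_of_nonneg_left (hapos 0)
        · rw [hW, max_eq_right hc, Real.log_exp, Real.log_one]
          exact le_add_of_nonneg_right (hapos _)
      have h4 : max (a c₄) (a (c₆ + Real.log (Real.log W)))
          ≤ a c₄ + a (c₆ + Real.log (Real.log W)) := by
        have := hapos c₄; have := hapos (c₆ + Real.log (Real.log W))
        rcases max_cases (a c₄) (a (c₆ + Real.log (Real.log W))) with ⟨h, _⟩ | ⟨h, _⟩ <;>
          (rw [h]; linarith)
      rw [hCA]
      linarith
    have hj' : a (Real.log (Real.log (maxMod (A j) r))) / betaDen b g r < q' :=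
      hr1 ⟨j, hjk⟩
    rw [← hMj] at hj'
    have hnum : a (Real.log (Real.log Mj)) < q' * betaDen b g r := by
      rwa [div_lt_iff₀ hβpos] at hj'
    have hCAβ : CA ≤ (q - q') * betaDen b g r := by
      have h5 : CA / (q - q') ≤ betaDen b g r := le_trans (le_max_right _ _) hr2
      rw [div_le_iff₀ (by linarith)] at h5
      linarith [h5, (mul_comm (betaDen b g r) (q - q') :
        betaDen b g r * (q - q') = (q - q') * betaDen b g r)]
    rw [div_le_iff₀ hβpos]
    calc a (Real.log L2) ≤ CA + a (Real.log (Real.log Mj)) := haX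
    _ ≤ (q - q') * betaDen b g r + q' * betaDen b g r := by linarith
    _ = q * betaDen b g r := by ring
  · -- CASE B : the max modulus is bounded by 1
    push_neg at hbig
    have hball : ∀ z ∈ Metric.ball (0:ℂ) 1, ‖f z‖ ≤ 1 := by
      intro z hz
      have hz1 : ‖z‖ < 1 := by simpa [Metric.mem_ball, dist_zero_right] using hz
      have hz0 : 0 ≤ ‖z‖ := norm_nonneg z
      have h1 : 0 < (‖z‖ + 1) / 2 := by linarith
      have h2 : (‖z‖ + 1) / 2 < 1 := by linarith
      have h3 : ‖z‖ ≤ (‖z‖ + 1) / 2 := by linarith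
      exact le_trans (le_maxMod' hfA h1 h2 h3) (hbig _ ⟨h1, h2⟩)
    by_cases hone : ∃ z₁ ∈ Metric.ball (0:ℂ) 1, ‖f z₁‖ = 1
    · -- CASE B1 : f is a constant of modulus one
      obtain ⟨z₁, hz₁mem, hz₁norm⟩ := hone
      have hmax : IsMaxOn (norm ∘ f) (Metric.ball (0:ℂ) 1) z₁ := by
        intro z hz
        simp only [Function.comp_apply, Set.mem_setOf_eq, hz₁norm]
        exact hball z hz
      have hdiff : DifferentiableOn ℂ f (Metric.ball (0:ℂ) 1) :=
        fun x hx => ((hfA x hx).differentiableAt).differentiableWithinAt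
      have hconst : Set.EqOn f (Function.const ℂ (f z₁)) (Metric.ball (0:ℂ) 1) :=
        Complex.eqOn_of_isPreconnected_of_isMaxOn_norm
          (convex_ball (0:ℂ) 1).isPreconnected Metric.isOpen_ball hdiff hz₁mem hmax
      have hev2 : ∀ᶠ r in 𝓝[<] (1:ℝ), max 1 (a 0 / q) ≤ betaDen b g r :=
        hβtop.eventually_ge_atTop _
      have hev3 : Set.Ioo (1/2 : ℝ) 1 ∈ 𝓝[<] (1:ℝ) :=
        Ioo_mem_nhdsLT_of_mem ⟨by norm_num, le_refl 1⟩
      filter_upwards [hev2, hev3] with r hr2 hr3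
      have hr0 : (0:ℝ) < r := lt_trans (by norm_num) hr3.1
      have hr1' : r < 1 := hr3.2
      have hβpos : (0:ℝ) < betaDen b g r :=
        lt_of_lt_of_le one_pos (le_trans (le_max_left _ _) hr2)
      have hmm : maxMod f r = 1 := by
        apply le_antisymm
        · refine maxMod_le' zero_le_one (fun z hz => ?_)
          rw [hconst (by simp [Metric.mem_ball, dist_zero_right, hz, hr1'])]
          exact le_of_eq hz₁norm
        · have hnr : ‖((r:ℝ) : ℂ)‖ = r := by
            rw [Complex.norm_real, Real.norm_eq_abs, abs_of_pos hr0]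
          have h1 : ‖f ((r:ℝ) : ℂ)‖ ≤ maxMod f r :=
            le_maxMod' hfA hr0 hr1' (le_of_eq hnr)
          rwa [hconst (by simp only [Metric.mem_ball, dist_zero_right]; rw [hnr]; exact hr1'),
            Function.const_apply, hz₁norm] at h1
      rw [EReal.coe_le_coe_iff, hmm, Real.log_one, Real.log_zero, Real.log_zero,
        div_le_iff₀ hβpos]
      have h6 : a 0 / q ≤ betaDen b g r := le_trans (le_max_right _ _) hr2
      rw [div_le_iff₀ hq0] at h6
      linarith [h6, (mul_comm (betaDen b g r) q :
        betaDen b g r * q = q * betaDen b g r)]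
    · -- CASE B2 : ‖f‖ < 1 on the disc; use the Schwarz–Pick estimate
      push_neg at hone
      have hlt : ∀ z ∈ Metric.ball (0:ℂ) 1, ‖f z‖ < 1 :=
        fun z hz => lt_of_le_of_ne (hball z hz) (hone z hz)
      have hdiff : DifferentiableOn ℂ f (Metric.ball (0:ℂ) 1) :=
        fun x hx => ((hfA x hx).differentiableAt).differentiableWithinAt
      have hmaps : Set.MapsTo f (Metric.ball (0:ℂ) 1) (Metric.ball (0:ℂ) 1) :=
        fun z hz => mem_ball_zero_iff.2 (hlt z hz)
      have hw1 : ‖f 0‖ < 1 := hlt 0 (Metric.mem_ball_self one_pos)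
      have hnsq : Complex.normSq (f 0) < 1 := by
        have h := Complex.sq_norm (f 0)
        have h2 : ‖f 0‖^2 < 1 := pow_lt_one₀ (norm_nonneg _) hw1 (by norm_num)
        linarith
      have hnsq0 : 0 ≤ Complex.normSq (f 0) := Complex.normSq_nonneg _
      set c₀ : ℝ := (1 - Complex.normSq (f 0)) / 8 with hc₀
      have hc₀pos : 0 < c₀ := by rw [hc₀]; linarith
      have hc₀le : c₀ ≤ 1/8 := by rw [hc₀]; linarith
      set m₀ : ℝ := ‖f z₀‖ with hm₀
      have hm₀pos : 0 < m₀ := by rw [hm₀]; exact norm_pos_iff.2 hz₀ne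
      set D₀ : ℝ := max (-Real.log m₀) 1 with hD₀
      clear_value D₀
      have hD₀1 : 1 ≤ D₀ := by rw [hD₀]; exact le_max_right _ _
      set E : ℝ := Real.log D₀ + |Real.log c₀| + 1 with hE
      clear_value E
      have hlogD₀ : 0 ≤ Real.log D₀ := Real.log_nonneg hD₀1
      have hE1 : 1 ≤ E := by
        have h2 : 0 ≤ |Real.log c₀| := abs_nonneg _
        rw [hE]; linarith
      set c₉ : ℝ := Real.log (E + 1) with hc₉
      clear_value c₉
      obtain ⟨D, hD0, hD⟩ := L1_shift ha1 c₉
      have hlo : (fun r : ℝ => a (Real.log (Real.log (1 / (1 - r)))))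
          =o[𝓝[<] (1:ℝ)] fun r => betaDen b g r := by
        have h := (hsmall 2 (le_refl 2)).comp_tendsto tendsto_one_div_one_sub
        simp only [Function.comp_def, log_two_iter] at h
        exact h
      have hev4 := hlo.def (half_pos hq0)
      have hev2 : ∀ᶠ r in 𝓝[<] (1:ℝ), max 1 (2 * D / q) ≤ betaDen b g r :=
        hβtop.eventually_ge_atTop _
      set r₄ : ℝ := max (max ‖z₀‖ (1 - Real.exp (-1))) (1/2) with hr₄
      clear_value r₄
      have hr₄1 : r₄ < 1 := by
        rw [hr₄]
        exact max_lt (max_lt hz₀1 (by linarith [Real.exp_pos (-1:ℝ)])) (by norm_num)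
      have hev3 : Set.Ioo r₄ 1 ∈ 𝓝[<] (1:ℝ) :=
        Ioo_mem_nhdsLT_of_mem ⟨hr₄1, le_refl 1⟩
      filter_upwards [hev2, hev3, hev4] with r hr2 hr3 hr4
      have hr1' : r < 1 := hr3.2
      have h12 : (1/2 : ℝ) ≤ r₄ := by rw [hr₄]; exact le_max_right _ _
      have hr0 : (0:ℝ) < r := by linarith [hr3.1]
      have hz₀r : ‖z₀‖ ≤ r := by
        have h := le_trans (le_max_left ‖z₀‖ (1 - Real.exp (-1))) (le_max_left _ (1/2:ℝ))
        rw [← hr₄] at h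
        exact le_trans h hr3.1.le
      have hre : 1 - Real.exp (-1) ≤ r := by
        have h := le_trans (le_max_right ‖z₀‖ (1 - Real.exp (-1))) (le_max_left _ (1/2:ℝ))
        rw [← hr₄] at h
        exact le_trans h hr3.1.le
      have h1r : 0 < 1 - r := by linarith
      set t : ℝ := Real.log (1 / (1 - r)) with ht
      have hinv : Real.exp 1 ≤ 1 / (1 - r) := by
        have h1 : 1 - r ≤ Real.exp (-1) := by linarith
        have h2 : 1 / Real.exp (-1) ≤ 1 / (1 - r) := one_div_le_one_div_of_le h1r h1
        rwa [Real.exp_neg, one_div, inv_inv] at h2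
      have ht1 : 1 ≤ t := by
        rw [ht]
        calc (1:ℝ) = Real.log (Real.exp 1) := (Real.log_exp 1).symm
        _ ≤ _ := Real.log_le_log (Real.exp_pos 1) hinv
      have htlog : Real.log (1 - r) = -t := by
        rw [ht, one_div, Real.log_inv, neg_neg]
      set m := maxMod f r with hm
      have hm₀m : m₀ ≤ m := by
        rw [hm₀, hm]; exact le_maxMod' hfA hr0 hr1' hz₀r
      have hm0 : 0 < m := lt_of_lt_of_le hm₀pos hm₀m
      have hmup : m ≤ 1 - c₀ * (1 - r) := by
        rw [hm]
        have hnn : c₀ * (1 - r) ≤ 1/8 * 1 :=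
          mul_le_mul hc₀le (by linarith) (by linarith) (by norm_num)
        refine maxMod_le' (by linarith) (fun z hz => ?_)
        have hsp := schwarz_pick_bound hdiff hmaps
          (show ‖z‖ < 1 by rw [hz]; exact hr1')
        rw [hz] at hsp
        have hcc : (1 - r) * (1 - Complex.normSq (f 0)) / 8 = c₀ * (1 - r) := by
          rw [hc₀]; ring
        linarith
      clear_value m t c₀ m₀
      set L1 : ℝ := Real.log m with hL1
      have hL1up : L1 ≤ -(c₀ * (1 - r)) := by
        have h1 : Real.log m ≤ m - 1 := Real.log_le_sub_one_of_pos hm0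
        rw [hL1]; linarith
      have hL1low : Real.log m₀ ≤ L1 := by
        rw [hL1]; exact Real.log_le_log hm₀pos hm₀m
      set L2 : ℝ := Real.log L1 with hL2
      clear_value L1
      have hc₀r : 0 < c₀ * (1 - r) := mul_pos hc₀pos h1r
      have hL1neg : L1 < 0 := by linarith
      have hL2u : L2 = Real.log (-L1) := (Real.log_neg_eq_log L1).symm ▸ (by rw [hL2, ← Real.log_neg_eq_log])
      have hupos : 0 < -L1 := by linarith
      have huup : -L1 ≤ D₀ := by
        rw [hD₀]
        exact le_trans (by linarith) (le_max_left _ _)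
      have hL2up : L2 ≤ Real.log D₀ := by
        rw [hL2u]; exact Real.log_le_log hupos huup
      have hL2low : Real.log c₀ + Real.log (1 - r) ≤ L2 := by
        rw [hL2u, ← Real.log_mul hc₀pos.ne' h1r.ne']
        exact Real.log_le_log hc₀r (by linarith)
      clear_value L2
      have habs : |L2| ≤ E + t := by
        rw [abs_le]
        constructor
        · have h1 : -Real.log c₀ ≤ |Real.log c₀| := neg_le_abs _
          rw [hE]
          linarith [hL2low, htlog]
        · have h2 : 0 ≤ |Real.log c₀| := abs_nonneg _
          rw [hE]
          linarith [hL2up, ht1]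
      have hX : Real.log L2 ≤ c₉ + Real.log t := by
        have h1 : Real.log L2 ≤ Real.log (E + t) :=
          log_le_log_of_abs_le' (by linarith) habs
        have hEt : 0 ≤ E * (t - 1) := mul_nonneg (by linarith) (by linarith)
        have h2 : E + t ≤ (E + 1) * t := by linarith [hEt]
        have h3 : Real.log (E + t) ≤ Real.log ((E + 1) * t) :=
          Real.log_le_log (by linarith) h2
        rw [Real.log_mul (by linarith) (by linarith)] at h3
        rw [hc₉]; linarith
      have hβpos : (0:ℝ) < betaDen b g r :=
        lt_of_lt_of_le one_pos (le_trans (le_max_left _ _) hr2)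
      have haX : a (Real.log L2) ≤ a (Real.log t) + D := by
        have h1 : a (Real.log L2) ≤ a (c₉ + Real.log t) := hamono hX
        exact le_trans h1 (hD _)
      have hsm : a (Real.log t) ≤ q / 2 * betaDen b g r := by
        have h := hr4
        simp only [Real.norm_eq_abs] at h
        rw [abs_of_nonneg (hapos _), abs_of_nonneg (hβ0 r)] at h
        exact h
      have hDsmall : 2 * D ≤ q * betaDen b g r := by
        have h5 : 2 * D / q ≤ betaDen b g r := le_trans (le_max_right _ _) hr2
        rw [div_le_iff₀ hq0] at h5
        linarith [h5, (mul_comm (betaDen b g r) q :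
          betaDen b g r * q = q * betaDen b g r)]
      rw [EReal.coe_le_coe_iff, div_le_iff₀ hβpos]
      linarith [haX, hsm, hDsmall]
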